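/- For $N_c = 2$ colours and $N_f = 1$ flavour, the Molien integral $\frac{1}{2}\cdot\frac{1}{2\pi i}\oint_{|z|=1} dz\, \frac{(1-z^2)(1-z^{-2})}{z\,(1-t_1 z)(1-t_2 z)(1-t_1 z^{-1})(1-t_2 z^{-1})}$ equals $\frac{1}{1-t_1 t_2}$, for complex parameters with $0 < |t_1|, |t_2| < 1$. -/

import Mathlib

open Complex

open Metric in
private lemma molienAux_integral_add {f g : ℂ → ℂ} {c : ℂ} {R : ℝ}
    (hf : CircleIntegrable f c R) (hg : CircleIntegrable g c R) :
    (∮ z in C(c, R), f z + g z) = (∮ z in C(c, R), f z) + ∮ z in C(c, R), g z := by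
  simp only [circleIntegral, smul_add, intervalIntegral.integral_add hf.out hg.out]

open Metric in
private lemma molienAux_inv_prod {a b : ℂ} (ha : ‖a‖ < 1) (hb : ‖b‖ < 1) :
    (∮ z in C(0, 1), ((z - a) * (z - b))⁻¹) = 0 := by
  have hasph : ∀ z ∈ sphere (0 : ℂ) 1, z - a ≠ 0 := by
    intro z hz
    rw [mem_sphere_zero_iff_norm] at hz
    intro h
    rw [sub_eq_zero] at h
    rw [h] at hz; exact absurd hz (ne_of_lt ha)
  have hbsph : ∀ z ∈ sphere (0 : ℂ) 1, z - b ≠ 0 := by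
    intro z hz
    rw [mem_sphere_zero_iff_norm] at hz
    intro h
    rw [sub_eq_zero] at h
    rw [h] at hz; exact absurd hz (ne_of_lt hb)
  rcases eq_or_ne a b with rfl | hab
  · have hfun : (fun z : ℂ => ((z - a) * (z - a))⁻¹) = fun z : ℂ => (z - a) ^ (-2 : ℤ) := by
      funext z
      rw [zpow_neg, zpow_two]
    rw [hfun]
    exact circleIntegral.integral_sub_zpow_of_ne (by decide) 0 a 1
  · have key : Set.EqOn (fun z : ℂ => ((z - a) * (z - b))⁻¹)
        (fun z : ℂ => (a - b)⁻¹ • (z - a)⁻¹ - (a - b)⁻¹ • (z - b)⁻¹) (sphere (0 : ℂ) 1) := by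
      intro z hz
      have h1 := hasph z hz
      have h2 := hbsph z hz
      have hab' : a - b ≠ 0 := sub_ne_zero.2 hab
      simp only [smul_eq_mul]
      field_simp
      ring
    rw [circleIntegral.integral_congr zero_le_one key]
    have hia : CircleIntegrable (fun z : ℂ => (a - b)⁻¹ • (z - a)⁻¹) 0 1 := by
      refine ContinuousOn.circleIntegrable zero_le_one ?_
      exact (((continuousOn_id).sub continuousOn_const).inv₀ hasph).const_smul ((a - b)⁻¹)
    have hib : CircleIntegrable (fun z : ℂ => (a - b)⁻¹ • (z - b)⁻¹) 0 1 := by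
      refine ContinuousOn.circleIntegrable zero_le_one ?_
      exact (((continuousOn_id).sub continuousOn_const).inv₀ hbsph).const_smul ((a - b)⁻¹)
    rw [circleIntegral.integral_sub hia hib, circleIntegral.integral_smul,
      circleIntegral.integral_smul,
      circleIntegral.integral_sub_inv_of_mem_ball (by simpa using ha),
      circleIntegral.integral_sub_inv_of_mem_ball (by simpa using hb), sub_self]

/-- Splitting off a simple pole from a quadratic-denominator fraction. -/
private lemma molienAux_split (b c a₁ a₂ z : ℂ) (h1 : z - a₁ ≠ 0) (h2 : z - a₂ ≠ 0) :
    (b * z + c) * ((z - a₁) * (z - a₂))⁻¹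
      = b • (z - a₂)⁻¹ + (c + b * a₁) • ((z - a₁) * (z - a₂))⁻¹ := by
  simp only [smul_eq_mul]
  field_simp
  ring

set_option maxHeartbeats 1000000 in
/-- The key partial fraction identity on the unit circle. -/
private lemma molienAux_partial_fractions (t₁ t₂ z : ℂ) (ht₁ : t₁ ≠ 0) (ht₂ : t₂ ≠ 0)
    (h1e2 : 1 - t₁ * t₂ ≠ 0) (hz0 : z ≠ 0) (hzt₁ : z - t₁ ≠ 0) (hzt₂ : z - t₂ ≠ 0)
    (h1t₁ : 1 - t₁ * z ≠ 0) (h1t₂ : 1 - t₂ * z ≠ 0) :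
    (1 - z ^ 2) * (1 - z⁻¹ ^ 2) /
        (z * (1 - t₁ * z) * (1 - t₂ * z) * (1 - t₁ * z⁻¹) * (1 - t₂ * z⁻¹))
    = (-(t₁ * t₂)⁻¹) * z⁻¹ + (((1 + t₁ * t₂) / (t₁ * t₂ * (1 - t₁ * t₂)) * z
          + -(t₁ + t₂) / (t₁ * t₂ * (1 - t₁ * t₂))) * ((z - t₁) * (z - t₂))⁻¹ +
        (-(1 + t₁ * t₂) / (1 - t₁ * t₂) * z + (t₁ + t₂) / (1 - t₁ * t₂)) *
          ((1 - t₁ * z) * (1 - t₂ * z))⁻¹) := by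
  have ez1 : (1 : ℂ) - t₁ * z⁻¹ = (z - t₁) / z := by field_simp
  have ez2 : (1 : ℂ) - t₂ * z⁻¹ = (z - t₂) / z := by field_simp
  have ez3 : (1 : ℂ) - z⁻¹ ^ 2 = -(1 - z ^ 2) / z ^ 2 := by
    field_simp
    ring
  have hbig : z * (1 - t₁ * z) * (1 - t₂ * z) * (z - t₁) * (z - t₂) ≠ 0 :=
    mul_ne_zero (mul_ne_zero (mul_ne_zero (mul_ne_zero hz0 h1t₁) h1t₂) hzt₁) hzt₂
  have step1 : (1 - z ^ 2) * (1 - z⁻¹ ^ 2) /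
        (z * (1 - t₁ * z) * (1 - t₂ * z) * (1 - t₁ * z⁻¹) * (1 - t₂ * z⁻¹))
      = -(1 - z ^ 2) ^ 2 / (z * (1 - t₁ * z) * (1 - t₂ * z) * (z - t₁) * (z - t₂)) := by
    rw [ez1, ez2, ez3, div_eq_div_iff
      (by exact mul_ne_zero (mul_ne_zero (mul_ne_zero (mul_ne_zero hz0 h1t₁) h1t₂)
        (div_ne_zero hzt₁ hz0)) (div_ne_zero hzt₂ hz0)) hbig]
    field_simp
  have hb1 : t₁ * t₂ * z ≠ 0 := mul_ne_zero (mul_ne_zero ht₁ ht₂) hz0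
  have hb2 : t₁ * t₂ * (1 - t₁ * t₂) * ((z - t₁) * (z - t₂)) ≠ 0 :=
    mul_ne_zero (mul_ne_zero (mul_ne_zero ht₁ ht₂) h1e2) (mul_ne_zero hzt₁ hzt₂)
  have hb3 : (1 - t₁ * t₂) * ((1 - t₁ * z) * (1 - t₂ * z)) ≠ 0 :=
    mul_ne_zero h1e2 (mul_ne_zero h1t₁ h1t₂)
  have T1 : -(t₁ * t₂)⁻¹ * z⁻¹ = -1 / (t₁ * t₂ * z) := by
    ring
  have T2 : ((1 + t₁ * t₂) / (t₁ * t₂ * (1 - t₁ * t₂)) * z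
        + -(t₁ + t₂) / (t₁ * t₂ * (1 - t₁ * t₂))) * ((z - t₁) * (z - t₂))⁻¹
      = ((1 + t₁ * t₂) * z + -(t₁ + t₂)) / (t₁ * t₂ * (1 - t₁ * t₂) * ((z - t₁) * (z - t₂))) := by
    rw [div_mul_eq_mul_div, ← add_div, ← div_eq_mul_inv, div_div]
  have T3 : (-(1 + t₁ * t₂) / (1 - t₁ * t₂) * z + (t₁ + t₂) / (1 - t₁ * t₂)) *
        ((1 - t₁ * z) * (1 - t₂ * z))⁻¹
      = (-(1 + t₁ * t₂) * z + (t₁ + t₂)) / ((1 - t₁ * t₂) * ((1 - t₁ * z) * (1 - t₂ * z))) := by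
    rw [div_mul_eq_mul_div, ← add_div, ← div_eq_mul_inv, div_div]
  rw [step1, T1, T2, T3, div_add_div _ _ hb2 hb3, div_add_div _ _ hb1 (mul_ne_zero hb2 hb3),
    div_eq_div_iff hbig (mul_ne_zero hb1 (mul_ne_zero hb2 hb3))]
  ring

set_option maxHeartbeats 1000000 in
open Metric in
/-- The Molien integral for `SU(2)` SQCD with one flavour equals `1/(1 - t₁t₂)`. -/
theorem molien_su2_one_flavour (t₁ t₂ : ℂ)
    (h₁ : 0 < ‖t₁‖) (h₁' : ‖t₁‖ < 1) (h₂ : 0 < ‖t₂‖) (h₂' : ‖t₂‖ < 1) :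
    (1 / 2) * (1 / (2 * Real.pi * I)) *
      (∮ z in C(0, 1), (1 - z ^ 2) * (1 - z⁻¹ ^ 2) /
        (z * (1 - t₁ * z) * (1 - t₂ * z) * (1 - t₁ * z⁻¹) * (1 - t₂ * z⁻¹)))
    = 1 / (1 - t₁ * t₂) := by
  have ht₁ : t₁ ≠ 0 := by intro h; rw [h] at h₁; simp at h₁
  have ht₂ : t₂ ≠ 0 := by intro h; rw [h] at h₂; simp at h₂
  have he2norm : ‖t₁ * t₂‖ < 1 := by
    rw [norm_mul]
    nlinarith [norm_nonneg t₁, norm_nonneg t₂]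
  have he2 : t₁ * t₂ ≠ 0 := mul_ne_zero ht₁ ht₂
  have h1e2 : (1 : ℂ) - t₁ * t₂ ≠ 0 := by
    intro h
    rw [sub_eq_zero] at h
    rw [← h] at he2norm
    simp at he2norm
  -- partial fraction constants
  set A : ℂ := -(t₁ * t₂)⁻¹ with hA
  set B : ℂ := (1 + t₁ * t₂) / (t₁ * t₂ * (1 - t₁ * t₂)) with hB
  set C : ℂ := -(t₁ + t₂) / (t₁ * t₂ * (1 - t₁ * t₂)) with hC
  set D : ℂ := -(1 + t₁ * t₂) / (1 - t₁ * t₂) with hD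
  set E : ℂ := (t₁ + t₂) / (1 - t₁ * t₂) with hE
  -- nonvanishing facts on the sphere
  have hsub : ∀ (t z : ℂ), ‖t‖ < 1 → z ∈ sphere (0 : ℂ) 1 → z - t ≠ 0 := by
    intro t z ht hz h
    rw [mem_sphere_zero_iff_norm] at hz
    rw [sub_eq_zero] at h
    rw [h] at hz; exact absurd hz (ne_of_lt ht)
  have honemul : ∀ (t z : ℂ), ‖t‖ < 1 → ‖z‖ ≤ 1 → 1 - t * z ≠ 0 := by
    intro t z ht hz h
    rw [sub_eq_zero] at h
    have : ‖t * z‖ < 1 := by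
      rw [norm_mul]
      nlinarith [norm_nonneg t, norm_nonneg z]
    rw [← h] at this
    simp at this
  -- the partial fraction identity on the circle
  have key : Set.EqOn
      (fun z : ℂ => (1 - z ^ 2) * (1 - z⁻¹ ^ 2) /
        (z * (1 - t₁ * z) * (1 - t₂ * z) * (1 - t₁ * z⁻¹) * (1 - t₂ * z⁻¹)))
      (fun z : ℂ => A * z⁻¹ + ((B * z + C) * ((z - t₁) * (z - t₂))⁻¹ +
        (D * z + E) * ((1 - t₁ * z) * (1 - t₂ * z))⁻¹)) (sphere (0 : ℂ) 1) := by
    intro z hz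
    have hz1 : ‖z‖ = 1 := mem_sphere_zero_iff_norm.1 hz
    have hz0 : z ≠ 0 := by intro h; rw [h] at hz1; simp at hz1
    have hzt₁ : z - t₁ ≠ 0 := hsub t₁ z h₁' hz
    have hzt₂ : z - t₂ ≠ 0 := hsub t₂ z h₂' hz
    have h1t₁ : 1 - t₁ * z ≠ 0 := honemul t₁ z h₁' hz1.le
    have h1t₂ : 1 - t₂ * z ≠ 0 := honemul t₂ z h₂' hz1.le
    exact molienAux_partial_fractions t₁ t₂ z ht₁ ht₂ h1e2 hz0 hzt₁ hzt₂ h1t₁ h1t₂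
  rw [circleIntegral.integral_congr zero_le_one key]
  -- integrability of the three pieces
  have hi1 : CircleIntegrable (fun z : ℂ => A * z⁻¹) 0 1 := by
    refine ContinuousOn.circleIntegrable zero_le_one ?_
    refine continuousOn_const.mul (ContinuousOn.inv₀ continuousOn_id fun z hz => ?_)
    rw [mem_sphere_zero_iff_norm] at hz
    intro h; rw [h] at hz; simp at hz
  have hcsub : ∀ t : ℂ, ‖t‖ < 1 → ContinuousOn (fun z : ℂ => (z - t)⁻¹) (sphere (0:ℂ) 1) :=
    fun t ht => ((continuousOn_id).sub continuousOn_const).inv₀ (hsub t · ht)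
  have hi2 : CircleIntegrable (fun z : ℂ => (B * z + C) * ((z - t₁) * (z - t₂))⁻¹) 0 1 := by
    refine ContinuousOn.circleIntegrable zero_le_one ?_
    refine ContinuousOn.mul (by fun_prop) ?_
    refine ContinuousOn.inv₀ (by fun_prop) fun z hz => ?_
    exact mul_ne_zero (hsub t₁ z h₁' hz) (hsub t₂ z h₂' hz)
  have hi3 : CircleIntegrable (fun z : ℂ => (D * z + E) * ((1 - t₁ * z) * (1 - t₂ * z))⁻¹) 0 1 := by
    refine ContinuousOn.circleIntegrable zero_le_one ?_
    refine ContinuousOn.mul (by fun_prop) ?_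
    refine ContinuousOn.inv₀ (by fun_prop) fun z hz => ?_
    have hz1 : ‖z‖ = 1 := mem_sphere_zero_iff_norm.1 hz
    exact mul_ne_zero (honemul t₁ z h₁' hz1.le) (honemul t₂ z h₂' hz1.le)
  have hi23 : CircleIntegrable (fun z : ℂ => (B * z + C) * ((z - t₁) * (z - t₂))⁻¹ +
      (D * z + E) * ((1 - t₁ * z) * (1 - t₂ * z))⁻¹) 0 1 := hi2.add hi3
  rw [molienAux_integral_add hi1 hi23, molienAux_integral_add hi2 hi3]
  -- first integral
  have e1 : (∮ z in C(0, 1), A * z⁻¹) = A * (2 * Real.pi * I) := by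
    have hsmul : (fun z : ℂ => A * z⁻¹) = fun z : ℂ => A • (z - 0)⁻¹ := by
      funext z; rw [smul_eq_mul, sub_zero]
    rw [hsmul, circleIntegral.integral_smul,
      circleIntegral.integral_sub_inv_of_mem_ball (by simp), smul_eq_mul]
  -- second integral
  have e2 : (∮ z in C(0, 1), (B * z + C) * ((z - t₁) * (z - t₂))⁻¹)
      = B * (2 * Real.pi * I) := by
    have key2 : Set.EqOn (fun z : ℂ => (B * z + C) * ((z - t₁) * (z - t₂))⁻¹)
        (fun z : ℂ => B • (z - t₂)⁻¹ + (C + B * t₁) • ((z - t₁) * (z - t₂))⁻¹)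
        (sphere (0 : ℂ) 1) := fun z hz =>
      molienAux_split B C t₁ t₂ z (hsub t₁ z h₁' hz) (hsub t₂ z h₂' hz)
    rw [circleIntegral.integral_congr zero_le_one key2]
    have ha : CircleIntegrable (fun z : ℂ => B • (z - t₂)⁻¹) 0 1 :=
      ContinuousOn.circleIntegrable zero_le_one ((hcsub t₂ h₂').const_smul B)
    have hb : CircleIntegrable (fun z : ℂ => (C + B * t₁) • ((z - t₁) * (z - t₂))⁻¹) 0 1 := by
      refine ContinuousOn.circleIntegrable zero_le_one ?_
      refine ContinuousOn.const_smul (ContinuousOn.inv₀ (f := fun z : ℂ => (z - t₁) * (z - t₂))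
        (by fun_prop) fun z hz => ?_) (C + B * t₁)
      exact mul_ne_zero (hsub t₁ z h₁' hz) (hsub t₂ z h₂' hz)
    rw [molienAux_integral_add ha hb, circleIntegral.integral_smul,
      circleIntegral.integral_smul,
      circleIntegral.integral_sub_inv_of_mem_ball (by simpa using h₂'),
      molienAux_inv_prod h₁' h₂']
    simp [smul_eq_mul]
  -- third integral
  have e3 : (∮ z in C(0, 1), (D * z + E) * ((1 - t₁ * z) * (1 - t₂ * z))⁻¹) = 0 := by
    refine circleIntegral_eq_zero_of_differentiable_on_off_countable zero_le_one
      Set.countable_empty ?_ ?_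
    · refine ContinuousOn.mul (by fun_prop) ?_
      refine ContinuousOn.inv₀ (by fun_prop) fun z hz => ?_
      rw [mem_closedBall_zero_iff] at hz
      exact mul_ne_zero (honemul t₁ z h₁' hz) (honemul t₂ z h₂' hz)
    · intro z hz
      rw [Set.diff_empty, mem_ball_zero_iff] at hz
      have hne : (1 - t₁ * z) * (1 - t₂ * z) ≠ 0 :=
        mul_ne_zero (honemul t₁ z h₁' hz.le) (honemul t₂ z h₂' hz.le)
      exact ((differentiable_const D).mul differentiable_id |>.add
        (differentiable_const E)).differentiableAt.mul
        (((differentiable_const (1:ℂ)).sub ((differentiable_const t₁).mul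
          differentiable_id) |>.mul ((differentiable_const (1:ℂ)).sub
          ((differentiable_const t₂).mul differentiable_id))).differentiableAt.inv hne)
  rw [e1, e2, e3, add_zero]
  have hπ : (2 * (Real.pi : ℂ) * I) ≠ 0 := by
    simp [Real.pi_ne_zero, I_ne_zero]
  rw [hA, hB]
  field_simp
  ring
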